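/- Let φ̄ ∈ X and suppose φ : [0,∞) → X is differentiable and satisfies the exact-data asymptotic-regularization flow φ'(t) = −L*(L φ(t) − L φ̄) for all t ≥ 0. Then the residual is square-integrable over the whole half-line, with the explicit bound ∫₀^∞ ‖L φ(t) − L φ̄‖² dt ≤ (1/2) ‖φ(0) − φ̄‖² < ∞. -/

import Mathlib

open MeasureTheory Set

theorem exact_flow_residual_square_integrable
    {X Y : Type*}
    [NormedAddCommGroup X] [InnerProductSpace ℝ X] [CompleteSpace X]
    [NormedAddCommGroup Y] [InnerProductSpace ℝ Y] [CompleteSpace Y]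
    (L : X →L[ℝ] Y) (φbar : X) (φ : ℝ → X)
    (hflow : ∀ t : ℝ, 0 ≤ t →
      HasDerivAt φ (-(L.adjoint (L (φ t) - L φbar))) t) :
    MeasureTheory.IntegrableOn (fun t => ‖L (φ t) - L φbar‖ ^ 2) (Set.Ioi (0:ℝ)) ∧
    ∫ t in Set.Ioi (0:ℝ), ‖L (φ t) - L φbar‖ ^ 2 ≤ (1/2) * ‖φ 0 - φbar‖ ^ 2 := by
  set f : ℝ → ℝ := fun t => ‖L (φ t) - L φbar‖ ^ 2 with hf
  set V : ℝ → ℝ := fun t => (1/2) * ‖φ t - φbar‖ ^ 2 with hV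
  -- derivative of -V is f on [0,∞)
  have hderiv : ∀ t : ℝ, 0 ≤ t → HasDerivAt (fun s => -(V s)) (f t) t := by
    intro t ht
    have h1 : HasDerivAt (fun s => φ s - φbar)
        (-(L.adjoint (L (φ t) - L φbar))) t := (hflow t ht).sub_const φbar
    have h2 := (h1.inner ℝ h1).const_mul (1/2 : ℝ)
    have key : (1/2 : ℝ) * (inner ℝ (φ t - φbar) (-(L.adjoint (L (φ t) - L φbar)))
        + inner ℝ (-(L.adjoint (L (φ t) - L φbar))) (φ t - φbar)) = -(f t) := by
      have hmap : L (φ t - φbar) = L (φ t) - L φbar := by simp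
      have e1 : (inner ℝ (φ t - φbar) (L.adjoint (L (φ t) - L φbar)) : ℝ)
          = ‖L (φ t) - L φbar‖ ^ 2 := by
        rw [real_inner_comm, ContinuousLinearMap.adjoint_inner_left, hmap,
          real_inner_self_eq_norm_sq]
      have e2 : (inner ℝ ((ContinuousLinearMap.adjoint L) (L (φ t) - L φbar)) (φ t - φbar) : ℝ)
          = ‖L (φ t) - L φbar‖ ^ 2 := by rw [← e1, real_inner_comm]
      simp only [inner_neg_left, inner_neg_right]
      rw [e2, e1]
      simp only [hf]; ring
    have h3 : HasDerivAt (fun s => (1/2 : ℝ) * inner ℝ (φ s - φbar) (φ s - φbar)) (-(f t)) t := by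
      rwa [key] at h2
    have h4 : HasDerivAt (fun s => -((1/2 : ℝ) * inner ℝ (φ s - φbar) (φ s - φbar))) (-(-(f t))) t := h3.neg
    have heq : (fun s => -((1/2 : ℝ) * inner ℝ (φ s - φbar) (φ s - φbar))) = fun s => -(V s) := by
      funext s
      rw [hV]
      simp [real_inner_self_eq_norm_sq]
    rw [heq] at h4
    simpa using h4
  -- continuity of f at t ≥ 0
  have hcont : ∀ t : ℝ, 0 ≤ t → ContinuousAt f t := by
    intro t ht
    exact ((continuous_norm.comp ((L.continuous.comp continuous_id).sub continuous_const)).pow 2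
      ).continuousAt.comp (hflow t ht).continuousAt
  have hnonneg : ∀ t, 0 ≤ f t := fun t => sq_nonneg _
  -- interval integrability
  have hii : ∀ T : ℝ, 0 ≤ T → IntervalIntegrable f volume 0 T := by
    intro T hT
    apply ContinuousOn.intervalIntegrable
    intro s hs
    rw [uIcc_of_le hT] at hs
    exact (hcont s hs.1).continuousWithinAt
  -- fundamental theorem: ∫ 0..T f = V 0 - V T ≤ V 0
  have hFTC : ∀ T : ℝ, 0 ≤ T → ∫ s in (0:ℝ)..T, f s = V 0 - V T := by
    intro T hT
    have := intervalIntegral.integral_eq_sub_of_hasDerivAt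
      (f := fun s => -(V s)) (f' := f) (a := (0:ℝ)) (b := T)
      (fun s hs => hderiv s (by rw [uIcc_of_le hT] at hs; exact hs.1)) (hii T hT)
    rw [this]; ring
  have hbound : ∀ T : ℝ, 0 ≤ T → ∫ s in (0:ℝ)..T, f s ≤ V 0 := by
    intro T hT
    rw [hFTC T hT]
    have : 0 ≤ V T := by positivity
    linarith
  have hIoc : ∀ T : ℝ, IntegrableOn f (Ioc (0:ℝ) T) := by
    intro T
    rcases le_or_gt T 0 with h | h
    · rw [Ioc_eq_empty (by linarith)]; simp
    · exact (intervalIntegrable_iff_integrableOn_Ioc_of_le h.le).mp (hii T h.le)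
  have hint : IntegrableOn f (Ioi (0:ℝ)) := by
    apply integrableOn_Ioi_of_intervalIntegral_norm_bounded (V 0) 0
      (fun T : ℝ => hIoc T) Filter.tendsto_id
    filter_upwards [Filter.eventually_ge_atTop (0:ℝ)] with T hT
    have : ∫ x in (0:ℝ)..T, ‖f x‖ = ∫ x in (0:ℝ)..T, f x := by
      apply intervalIntegral.integral_congr
      intro s _; exact Real.norm_of_nonneg (hnonneg s)
    rw [this]; exact hbound T hT
  refine ⟨hint, ?_⟩
  have htend := intervalIntegral_tendsto_integral_Ioi 0 hint (Filter.tendsto_id (α := ℝ))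
  refine le_of_tendsto htend ?_
  filter_upwards [Filter.eventually_ge_atTop (0:ℝ)] with T hT
  exact hbound T hT
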